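/- Let A be an n×n complex matrix such that every eigenvalue of A has negative real part and A + A* is negative semidefinite, and let φ be a finite Blaschke product of degree d with d ≥ n. Then the matrix I − φ(−A)*φ(−A) is invertible; equivalently, φ(−A)*φ(−A) does not have 1 as an eigenvalue, and the defect index of φ(−A) equals n. -/

import Mathlib

open Matrix
open scoped ComplexOrder

variable {n : ℕ}

noncomputable def bfact {n : ℕ} (M : Matrix (Fin n) (Fin n) ℂ) (a : ℂ) : Matrix (Fin n) (Fin n) ℂ :=
  (M + (starRingEnd ℂ a) • 1) * (M - a • 1)⁻¹

noncomputable def bprod {n : ℕ} (M : Matrix (Fin n) (Fin n) ℂ) (L : List ℂ) : Matrix (Fin n) (Fin n) ℂ :=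
  (L.map (bfact M)).prod

noncomputable def polyProd {n : ℕ} (M : Matrix (Fin n) (Fin n) ℂ) (L : List ℂ) :
    Matrix (Fin n) (Fin n) ℂ :=
  (L.map fun b => M - b • 1).prod

lemma qform (N : Matrix (Fin n) (Fin n) ℂ) (v : Fin n → ℂ) :
    star v ⬝ᵥ ((Nᴴ * N) *ᵥ v) = star (N *ᵥ v) ⬝ᵥ (N *ᵥ v) := by
  rw [← Matrix.mulVec_mulVec, Matrix.star_mulVec, ← Matrix.dotProduct_mulVec]

lemma bfact_identity (M : Matrix (Fin n) (Fin n) ℂ) (a : ℂ)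
    (ha : IsUnit (M - a • 1)) :
    1 - (bfact M a)ᴴ * (bfact M a)
      = (-(a + starRingEnd ℂ a)) • ((M - a • 1)⁻¹ᴴ * (M + Mᴴ) * (M - a • 1)⁻¹) := by
  set s := starRingEnd ℂ a with hs
  set R := (M - a • 1)⁻¹ with hR
  have hd : IsUnit (M - a • 1).det := (Matrix.isUnit_iff_isUnit_det _).mp ha
  have h1 : (M - a • 1) * R = 1 := Matrix.mul_nonsing_inv _ hd
  have hconj : (M - a • 1)ᴴ = Mᴴ - s • 1 := by
    simp [Matrix.conjTranspose_sub, Matrix.conjTranspose_smul, hs]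
  have h3 : Rᴴ * (M - a • 1)ᴴ = 1 := by
    rw [← Matrix.conjTranspose_mul, h1, Matrix.conjTranspose_one]
  have hone : Rᴴ * ((Mᴴ - s • 1) * (M - a • 1)) * R
      = (1 : Matrix (Fin n) (Fin n) ℂ) := by
    rw [← hconj, ← Matrix.mul_assoc Rᴴ, h3, Matrix.one_mul, h1]
  have hf : (bfact M a)ᴴ * (bfact M a)
      = Rᴴ * ((Mᴴ + a • 1) * (M + s • 1)) * R := by
    rw [bfact, Matrix.conjTranspose_mul]
    have : (M + s • 1)ᴴ = Mᴴ + a • 1 := by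
      simp [Matrix.conjTranspose_add, Matrix.conjTranspose_smul, hs]
    rw [this]
    noncomm_ring
  have hbracket : (Mᴴ - s • 1) * (M - a • 1) - (Mᴴ + a • 1) * (M + s • 1)
      = (-(a + s)) • (M + Mᴴ) := by
    simp only [sub_mul, mul_sub, add_mul, mul_add, smul_mul_assoc, mul_smul_comm, smul_smul,
      mul_one, one_mul]
    module
  rw [hf]
  nth_rewrite 1 [← hone]
  rw [← Matrix.sub_mul, ← Matrix.mul_sub, hbracket]
  rw [mul_smul_comm, smul_mul_assoc]

lemma bfact_qdiff (M : Matrix (Fin n) (Fin n) ℂ) (a : ℂ)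
    (ha : IsUnit (M - a • 1)) (v : Fin n → ℂ) :
    star v ⬝ᵥ v - star (bfact M a *ᵥ v) ⬝ᵥ (bfact M a *ᵥ v)
      = (-(a + starRingEnd ℂ a))
          * (star ((M - a • 1)⁻¹ *ᵥ v) ⬝ᵥ ((M + Mᴴ) *ᵥ ((M - a • 1)⁻¹ *ᵥ v))) := by
  have h := congrArg (fun X => star v ⬝ᵥ (X *ᵥ v)) (bfact_identity M a ha)
  rw [Matrix.sub_mulVec, Matrix.one_mulVec, dotProduct_sub, qform] at h
  rw [h, Matrix.smul_mulVec, dotProduct_smul, smul_eq_mul]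
  congr 1
  rw [Matrix.star_mulVec, ← Matrix.dotProduct_mulVec]
  simp only [← Matrix.mulVec_mulVec, Matrix.mul_assoc]

lemma coef_eq (a : ℂ) : -(a + starRingEnd ℂ a) = ((-(2 * a.re) : ℝ) : ℂ) := by
  rw [Complex.add_conj]; push_cast; ring

lemma bfact_contraction (M : Matrix (Fin n) (Fin n) ℂ) (hC : (M + Mᴴ).PosSemidef)
    (a : ℂ) (hare : a.re < 0) (ha : IsUnit (M - a • 1)) (v : Fin n → ℂ) :
    star (bfact M a *ᵥ v) ⬝ᵥ (bfact M a *ᵥ v) ≤ star v ⬝ᵥ v := by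
  rw [← sub_nonneg, bfact_qdiff M a ha v, coef_eq]
  exact mul_nonneg (by rw [Complex.zero_le_real]; linarith) (hC.dotProduct_mulVec_nonneg _)

lemma bfact_equality (M : Matrix (Fin n) (Fin n) ℂ) (hC : (M + Mᴴ).PosSemidef)
    (a : ℂ) (hare : a.re < 0) (ha : IsUnit (M - a • 1)) (v : Fin n → ℂ)
    (heq : star (bfact M a *ᵥ v) ⬝ᵥ (bfact M a *ᵥ v) = star v ⬝ᵥ v) :
    (M + Mᴴ) *ᵥ ((M - a • 1)⁻¹ *ᵥ v) = 0 := by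
  have h := bfact_qdiff M a ha v
  rw [heq, sub_self, coef_eq] at h
  have hc : ((-(2 * a.re) : ℝ) : ℂ) ≠ 0 := by
    simp only [ne_eq, Complex.ofReal_eq_zero]; linarith
  have ht : star ((M - a • 1)⁻¹ *ᵥ v) ⬝ᵥ ((M + Mᴴ) *ᵥ ((M - a • 1)⁻¹ *ᵥ v)) = 0 := by
    rcases mul_eq_zero.mp h.symm with h' | h'
    · exact absurd h' hc
    · exact h'
  exact (hC.dotProduct_mulVec_zero_iff _).mp ht

lemma commute_polyProd (M : Matrix (Fin n) (Fin n) ℂ) (c : ℂ) (L : List ℂ) :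
    Commute (M + c • 1) (polyProd M L) := by
  apply Commute.list_prod_right
  intro X hX
  obtain ⟨b, _, rfl⟩ := List.mem_map.mp hX
  have h1 : Commute M ((b : ℂ) • (1 : Matrix (Fin n) (Fin n) ℂ)) :=
    (Commute.one_right M).smul_right b
  have h2 : Commute ((c : ℂ) • (1 : Matrix (Fin n) (Fin n) ℂ)) M :=
    (Commute.one_left M).smul_left c
  have h3 : Commute ((c : ℂ) • (1 : Matrix (Fin n) (Fin n) ℂ))
      ((b : ℂ) • (1 : Matrix (Fin n) (Fin n) ℂ)) :=
    ((Commute.refl (1 : Matrix (Fin n) (Fin n) ℂ)).smul_left c).smul_right b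
  exact ((Commute.refl M).sub_right h1).add_left (h2.sub_right h3)

lemma bprod_contraction (M : Matrix (Fin n) (Fin n) ℂ) (hC : (M + Mᴴ).PosSemidef)
    (hdet : ∀ a : ℂ, a.re < 0 → IsUnit (M - a • 1)) (L : List ℂ)
    (hL : ∀ a ∈ L, a.re < 0) (v : Fin n → ℂ) :
    star (bprod M L *ᵥ v) ⬝ᵥ (bprod M L *ᵥ v) ≤ star v ⬝ᵥ v := by
  induction L generalizing v with
  | nil => simp [bprod]
  | cons a L ih =>
    have h1 : bprod M (a :: L) *ᵥ v = bfact M a *ᵥ (bprod M L *ᵥ v) := by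
      simp [bprod, Matrix.mulVec_mulVec]
    rw [h1]
    exact le_trans
      (bfact_contraction M hC a (hL a (by simp)) (hdet a (hL a (by simp))) _)
      (ih (fun b hb => hL b (by simp [hb])) v)

lemma key_lemma (M : Matrix (Fin n) (Fin n) ℂ) (hC : (M + Mᴴ).PosSemidef)
    (hdet : ∀ a : ℂ, a.re < 0 → IsUnit (M - a • 1)) :
    ∀ (L : List ℂ), (∀ a ∈ L, a.re < 0) → ∀ w : Fin n → ℂ,
      star (bprod M L *ᵥ (polyProd M L.reverse *ᵥ w)) ⬝ᵥ
          (bprod M L *ᵥ (polyProd M L.reverse *ᵥ w))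
        = star (polyProd M L.reverse *ᵥ w) ⬝ᵥ (polyProd M L.reverse *ᵥ w) →
      ∀ j < L.length, (M + Mᴴ) *ᵥ ((M ^ j) *ᵥ w) = 0 := by
  intro L
  induction L using List.reverseRecOn with
  | nil => intro _ w _ j hj; simp at hj
  | append_singleton L' a ih =>
    intro hL w hQ j hj
    have hare : a.re < 0 := hL a (by simp)
    have hL' : ∀ b ∈ L', b.re < 0 := fun b hb => hL b (by simp [hb])
    have haU : IsUnit (M - a • 1) := hdet a hare
    have hdU : IsUnit (M - a • 1).det := (Matrix.isUnit_iff_isUnit_det _).mp haU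
    set m := L'.length with hm
    set ac := -(starRingEnd ℂ a) with hac
    set P' := polyProd M L'.reverse with hP'
    set u := P' *ᵥ w with hu
    set x := (M - a • 1) *ᵥ u with hxdef
    -- rewrite the hypothesis
    have hrev : polyProd M (L' ++ [a]).reverse *ᵥ w = x := by
      rw [List.reverse_append]
      show polyProd M ([a] ++ L'.reverse) *ᵥ w = x
      rw [List.singleton_append]
      show ((M - a • 1) :: (L'.reverse.map fun b => M - b • 1)).prod *ᵥ w = x
      rw [List.prod_cons, ← Matrix.mulVec_mulVec]; rfl
    have hbp : bprod M (L' ++ [a]) = bprod M L' * bfact M a := by simp [bprod]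
    rw [hrev, hbp] at hQ
    set y := bfact M a *ᵥ x with hydef
    have hQ2 : star (bprod M L' *ᵥ y) ⬝ᵥ (bprod M L' *ᵥ y) = star x ⬝ᵥ x := by
      rw [← hQ, ← Matrix.mulVec_mulVec]
    -- squeeze
    have hyx : star y ⬝ᵥ y = star x ⬝ᵥ x := by
      refine le_antisymm (bfact_contraction M hC a hare haU x) ?_
      rw [← hQ2]; exact bprod_contraction M hC hdet L' hL' y
    have hQ3 : star (bprod M L' *ᵥ y) ⬝ᵥ (bprod M L' *ᵥ y) = star y ⬝ᵥ y :=
      hQ2.trans hyx.symm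
    -- C u = 0
    have hRx : (M - a • 1)⁻¹ *ᵥ x = u := by
      rw [hxdef, Matrix.mulVec_mulVec, Matrix.nonsing_inv_mul _ hdU, Matrix.one_mulVec]
    have hCu : (M + Mᴴ) *ᵥ u = 0 := by
      have := bfact_equality M hC a hare haU x hyx
      rwa [hRx] at this
    -- y in terms of w'
    have hyu : y = (M + (starRingEnd ℂ a) • 1) *ᵥ u := by
      rw [hydef, hxdef, bfact, Matrix.mulVec_mulVec, Matrix.mul_assoc,
        Matrix.nonsing_inv_mul _ hdU, Matrix.mul_one]
    set w' := (M + (starRingEnd ℂ a) • 1) *ᵥ w with hw'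
    have hyP : y = P' *ᵥ w' := by
      rw [hyu, hu, Matrix.mulVec_mulVec, Matrix.mulVec_mulVec,
        (commute_polyProd M (starRingEnd ℂ a) L'.reverse).eq]
    have hIH : ∀ j < m, (M + Mᴴ) *ᵥ ((M ^ j) *ᵥ w') = 0 := by
      intro j hjm
      exact ih hL' w' (by rw [← hyP]; exact hQ3) j hjm
    -- recurrence
    have hrec : ∀ j < m, (M + Mᴴ) *ᵥ ((M ^ (j + 1)) *ᵥ w)
        = ac • ((M + Mᴴ) *ᵥ ((M ^ j) *ᵥ w)) := by
      intro j hjm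
      have h0 := hIH j hjm
      have hsplit : (M ^ j) *ᵥ w' = (M ^ (j+1)) *ᵥ w + (starRingEnd ℂ a) • ((M ^ j) *ᵥ w) := by
        rw [hw', Matrix.mulVec_mulVec, mul_add, mul_smul_comm, mul_one, ← pow_succ,
          Matrix.add_mulVec, Matrix.smul_mulVec]
      rw [hsplit, Matrix.mulVec_add, Matrix.mulVec_smul] at h0
      have := eq_neg_of_add_eq_zero_left h0
      rw [this, hac, neg_smul]
    have hREC1 : ∀ i ≤ m, (M + Mᴴ) *ᵥ ((M ^ i) *ᵥ w) = ac ^ i • ((M + Mᴴ) *ᵥ w) := by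
      intro i him
      induction i with
      | zero => simp
      | succ i ihi =>
        rw [hrec i (by omega), ihi (by omega), pow_succ, smul_smul, mul_comm]
    have hREC2 : ∀ (T : List ℂ) (i : ℕ), i + T.length ≤ m →
        (M + Mᴴ) *ᵥ ((M ^ i) *ᵥ (polyProd M T *ᵥ w))
          = ((T.map fun b => ac - b).prod * ac ^ i) • ((M + Mᴴ) *ᵥ w) := by
      intro T
      induction T with
      | nil =>
        intro i hi
        simp only [polyProd, List.map_nil, List.prod_nil, Matrix.one_mulVec, one_mul]
        exact hREC1 i (by simpa using hi)
      | cons b T ihT =>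
        intro i hi
        have hcons : polyProd M (b :: T) = (M - b • 1) * polyProd M T := by
          simp [polyProd]
        have hmat : M ^ i * ((M - b • 1) * polyProd M T)
            = M ^ (i+1) * polyProd M T - b • (M ^ i * polyProd M T) := by
          rw [← Matrix.mul_assoc, mul_sub, mul_smul_comm, mul_one, ← pow_succ,
            Matrix.sub_mul, Matrix.smul_mul]
        have hsplit : (M ^ i) *ᵥ (polyProd M (b :: T) *ᵥ w)
            = (M ^ (i+1)) *ᵥ (polyProd M T *ᵥ w) - b • ((M ^ i) *ᵥ (polyProd M T *ᵥ w)) := by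
          simp only [Matrix.mulVec_mulVec, hcons]
          rw [hmat, Matrix.sub_mulVec, Matrix.smul_mulVec]
        rw [hsplit, Matrix.mulVec_sub, Matrix.mulVec_smul,
          ihT (i+1) (by simp at hi ⊢; omega), ihT i (by simp at hi ⊢; omega)]
        rw [smul_smul, ← sub_smul]
        congr 1
        rw [List.map_cons, List.prod_cons]
        ring
    -- conclude C w = 0
    have hCw : (M + Mᴴ) *ᵥ w = 0 := by
      have h0 := hREC2 L'.reverse 0 (by simp [hm])
      rw [pow_zero, Matrix.one_mulVec, ← hP', ← hu, hCu] at h0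
      have hcne : ((L'.reverse.map fun b => ac - b).prod * ac ^ 0) ≠ 0 := by
        rw [pow_zero, mul_one]
        apply List.prod_ne_zero
        intro h0'
        obtain ⟨b, hb, hb0⟩ := List.mem_map.mp h0'
        have hbre : b.re < 0 := hL' b (List.mem_reverse.mp hb)
        have : (ac - b).re = -a.re - b.re := by
          simp [hac, Complex.sub_re, Complex.neg_re, Complex.conj_re]
        rw [hb0] at this
        simp at this
        linarith
      exact (smul_eq_zero.mp h0.symm).resolve_left hcne
    have hjm : j ≤ m := by
      simp only [List.length_append, List.length_singleton] at hj; omega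
    rw [hREC1 j hjm, hCw, smul_zero]

lemma krylov_endgame (M : Matrix (Fin n) (Fin n) ℂ)
    (hEig : ∀ (μ : ℂ) (v : Fin n → ℂ), v ≠ 0 → M *ᵥ v = μ • v → μ.re ≠ 0)
    (w : Fin n → ℂ) (hw : ∀ j < n, (M + Mᴴ) *ᵥ ((M ^ j) *ᵥ w) = 0) : w = 0 := by
  by_contra hw0
  -- the n+1 Krylov vectors are dependent
  have hnli : ¬ LinearIndependent ℂ (fun j : Fin (n+1) => (M ^ (j : ℕ)) *ᵥ w) := by
    intro h
    have := h.fintype_card_le_finrank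
    simp [Module.finrank_fintype_fun_eq_card] at this
  obtain ⟨g, hsum, i0, hi0⟩ := Fintype.not_linearIndependent_iff.mp hnli
  classical
  set s : Finset (Fin (n+1)) := Finset.univ.filter (fun i => g i ≠ 0) with hs
  have hsne : s.Nonempty := ⟨i0, by simp [hs, hi0]⟩
  set mf : Fin (n+1) := s.max' hsne with hmf
  have hgm : g mf ≠ 0 := by
    have := s.max'_mem hsne
    simp [hs] at this; exact this
  have hle : ∀ i, g i ≠ 0 → i ≤ mf := fun i hi => s.le_max' i (by simp [hs, hi])
  -- sums restricted to s
  have hsum2 : ∑ i ∈ s, g i • ((M ^ (i : ℕ)) *ᵥ w) = 0 := by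
    rw [← hsum]
    apply Finset.sum_subset (Finset.subset_univ s)
    intro i _ hi
    have : g i = 0 := by by_contra h; exact hi (by simp [hs, h])
    simp [this]
  have hsum3 : g mf • ((M ^ (mf : ℕ)) *ᵥ w)
      = - ∑ i ∈ s.erase mf, g i • ((M ^ (i : ℕ)) *ᵥ w) := by
    have := Finset.add_sum_erase s (fun i => g i • ((M ^ (i : ℕ)) *ᵥ w)) (s.max'_mem hsne)
    rw [← hmf] at this
    rw [← this] at hsum2
    linear_combination (norm := module) hsum2
  set V : Submodule ℂ (Fin n → ℂ) :=
    Submodule.span ℂ {u | ∃ i : ℕ, i < (mf : ℕ) ∧ u = (M ^ i) *ᵥ w} with hV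
  have h_top : (M ^ (mf : ℕ)) *ᵥ w ∈ V := by
    have : (M ^ (mf : ℕ)) *ᵥ w
        = (g mf)⁻¹ • (g mf • ((M ^ (mf : ℕ)) *ᵥ w)) := by
      rw [smul_smul, inv_mul_cancel₀ hgm, one_smul]
    rw [this, hsum3]
    refine V.smul_mem _ (V.neg_mem (Submodule.sum_mem _ ?_))
    intro i hi
    refine V.smul_mem _ (Submodule.subset_span ⟨(i : ℕ), ?_, rfl⟩)
    have hine : i ≠ mf := Finset.ne_of_mem_erase hi
    have : i ≤ mf := hle i (by have := Finset.mem_of_mem_erase hi; simp [hs] at this; exact this)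
    exact lt_of_le_of_ne (Fin.le_def.mp this) (fun h => hine (Fin.ext h))
  -- if mf = 0 then w = 0
  rcases Nat.eq_zero_or_pos (mf : ℕ) with hmf0 | hmfpos
  · rw [hmf0] at h_top
    have hVbot : {u : Fin n → ℂ | ∃ i : ℕ, i < 0 ∧ u = (M ^ i) *ᵥ w} = ∅ := by
      ext u; simp
    have hVbot2 : V = ⊥ := by
      rw [hV, hmf0, hVbot, Submodule.span_empty]
    rw [hVbot2, Submodule.mem_bot, pow_zero, Matrix.one_mulVec] at h_top
    exact hw0 h_top
  · -- V is nontrivial, M-invariant, contained in ker (M+Mᴴ)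
    have hwV : w ∈ V := Submodule.subset_span ⟨0, hmfpos, by simp⟩
    have hmfn : (mf : ℕ) ≤ n := Nat.lt_succ_iff.mp mf.isLt
    have h_M : ∀ u ∈ V, M.mulVecLin u ∈ V := by
      intro u hu
      induction hu using Submodule.span_induction with
      | mem u hmem =>
        obtain ⟨i, hi, rfl⟩ := hmem
        have : M.mulVecLin ((M ^ i) *ᵥ w) = (M ^ (i+1)) *ᵥ w := by
          simp only [Matrix.mulVecLin_apply, Matrix.mulVec_mulVec, ← pow_succ']
        rw [this]
        rcases Nat.lt_or_ge (i+1) (mf : ℕ) with h | h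
        · exact Submodule.subset_span ⟨i+1, h, rfl⟩
        · have : i + 1 = (mf : ℕ) := by omega
          rw [this]; exact h_top
      | zero => simp
      | add u v _ _ hu hv => rw [map_add]; exact V.add_mem hu hv
      | smul c u _ hu => rw [LinearMap.map_smul]; exact V.smul_mem c hu
    have h_C : ∀ u ∈ V, (M + Mᴴ) *ᵥ u = 0 := by
      intro u hu
      induction hu using Submodule.span_induction with
      | mem u hmem =>
        obtain ⟨i, hi, rfl⟩ := hmem
        exact hw i (by omega)
      | zero => simp
      | add u v _ _ hu hv => rw [Matrix.mulVec_add, hu, hv, add_zero]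
      | smul c u _ hu => rw [Matrix.mulVec_smul, hu, smul_zero]
    have : Nontrivial V := by
      refine ⟨⟨w, hwV⟩, 0, ?_⟩
      simp only [ne_eq, Submodule.mk_eq_zero]
      exact hw0
    set T : Module.End ℂ V := M.mulVecLin.restrict h_M with hT
    obtain ⟨μ, hμ⟩ := Module.End.exists_eigenvalue T
    obtain ⟨v, hv⟩ := hμ.exists_hasEigenvector
    have hMv : M *ᵥ (v : Fin n → ℂ) = μ • (v : Fin n → ℂ) := by
      have h1 : ((T v : V) : Fin n → ℂ) = M.mulVecLin (v : Fin n → ℂ) :=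
        LinearMap.restrict_coe_apply _ _ _
      have h2 : T v = μ • v := hv.apply_eq_smul
      rw [h2] at h1
      simpa using h1.symm
    have hv0 : (v : Fin n → ℂ) ≠ 0 := by
      intro h
      exact hv.right (by ext1; simp [h])
    have hre : μ.re ≠ 0 := hEig μ v hv0 hMv
    -- compute re μ = 0
    have hCv : (M + Mᴴ) *ᵥ (v : Fin n → ℂ) = 0 := h_C _ v.2
    have hq0 : star (v : Fin n → ℂ) ⬝ᵥ ((M + Mᴴ) *ᵥ (v : Fin n → ℂ)) = 0 := by
      rw [hCv, dotProduct_zero]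
    have hherm : star (v : Fin n → ℂ) ⬝ᵥ (Mᴴ *ᵥ (v : Fin n → ℂ))
        = star (M *ᵥ (v : Fin n → ℂ)) ⬝ᵥ (v : Fin n → ℂ) := by
      rw [Matrix.dotProduct_mulVec, ← Matrix.star_mulVec]
    rw [Matrix.add_mulVec, dotProduct_add, hherm, hMv] at hq0
    rw [dotProduct_smul, star_smul, smul_dotProduct] at hq0
    set q := star (v : Fin n → ℂ) ⬝ᵥ (v : Fin n → ℂ) with hqdef
    have hqne : q ≠ 0 := fun h => hv0 (dotProduct_star_self_eq_zero.mp h)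
    have hmu : μ + starRingEnd ℂ μ = 0 := by
      have h' : (μ + starRingEnd ℂ μ) * q = 0 := by
        rw [add_mul]
        simpa [smul_eq_mul, Complex.star_def] using hq0
      rcases mul_eq_zero.mp h' with h | h
      · exact h
      · exact absurd h hqne
    have hre0 : μ.re = 0 := by
      have h'' := congrArg Complex.re hmu
      simp [Complex.add_re, Complex.conj_re] at h''
      linarith
    exact hre hre0


/-- Evaluation of the finite Blaschke product with data `(ρ, α)` at a square
complex matrix `M`: `ρ • ∏ k (M + conj (α k) • 1) * (M - α k • 1)⁻¹`. -/
noncomputable def blaschkeEvalM {n d : ℕ} (ρ : ℂ) (α : Fin d → ℂ)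
    (M : Matrix (Fin n) (Fin n) ℂ) : Matrix (Fin n) (Fin n) ℂ :=
  ρ • (List.ofFn fun k : Fin d =>
      (M + (starRingEnd ℂ (α k)) • (1 : Matrix (Fin n) (Fin n) ℂ)) *
        (M - (α k) • (1 : Matrix (Fin n) (Fin n) ℂ))⁻¹).prod

theorem stmt_7 {n d : ℕ}
    (A : Matrix (Fin n) (Fin n) ℂ)
    (hstab : ∀ z ∈ spectrum ℂ A, z.re < 0)
    (hdiss : (-(A + Aᴴ)).PosSemidef)
    (ρ : ℂ) (hρ : ‖ρ‖ = 1)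
    (α : Fin d → ℂ) (hα : ∀ k, (α k).re < 0)
    (hdeg : n ≤ d) :
    IsUnit ((1 : Matrix (Fin n) (Fin n) ℂ)
        - (blaschkeEvalM ρ α (-A))ᴴ * blaschkeEvalM ρ α (-A)) ∧
      ¬ Module.End.HasEigenvalue
        (Matrix.toLin' ((blaschkeEvalM ρ α (-A))ᴴ * blaschkeEvalM ρ α (-A))) 1 ∧
      ((1 : Matrix (Fin n) (Fin n) ℂ)
        - (blaschkeEvalM ρ α (-A))ᴴ * blaschkeEvalM ρ α (-A)).rank = n := by
  classical
  set M : Matrix (Fin n) (Fin n) ℂ := -A with hM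
  have hCps : (M + Mᴴ).PosSemidef := by
    have : M + Mᴴ = -(A + Aᴴ) := by
      rw [hM, Matrix.conjTranspose_neg, neg_add]
    rwa [this]
  -- no eigenvalue with nonpositive real part for M
  have hEigPos : ∀ (μ : ℂ) (v : Fin n → ℂ), v ≠ 0 → M *ᵥ v = μ • v → 0 < μ.re := by
    intro μ v hv0 hMv
    have hAv : A *ᵥ v = (-μ) • v := by
      have : (-A) *ᵥ v = μ • v := hMv
      rw [Matrix.neg_mulVec] at this
      rw [neg_smul, ← this, neg_neg]
    have hmem : -μ ∈ spectrum ℂ A := by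
      rw [spectrum.mem_iff]
      intro hUnit
      obtain ⟨U, hU⟩ := hUnit
      have hz : ((algebraMap ℂ (Matrix (Fin n) (Fin n) ℂ) (-μ)) - A) *ᵥ v = 0 := by
        rw [Algebra.algebraMap_eq_smul_one, Matrix.sub_mulVec, Matrix.smul_mulVec,
          Matrix.one_mulVec, hAv, sub_self]
      have : v = 0 := by
        calc v = ((↑U⁻¹ * ↑U : Matrix (Fin n) (Fin n) ℂ)) *ᵥ v := by
                  rw [U.inv_mul, Matrix.one_mulVec]
        _ = (↑U⁻¹ : Matrix (Fin n) (Fin n) ℂ) *ᵥ ((↑U : Matrix (Fin n) (Fin n) ℂ) *ᵥ v) := by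
                  rw [← Matrix.mulVec_mulVec]
        _ = (↑U⁻¹ : Matrix (Fin n) (Fin n) ℂ) *ᵥ 0 := by rw [hU, hz]
        _ = 0 := Matrix.mulVec_zero _
      exact hv0 this
    have := hstab _ hmem
    simp only [Complex.neg_re] at this
    linarith
  have hdet : ∀ a : ℂ, a.re < 0 → IsUnit (M - a • 1) := by
    intro a ha
    rw [Matrix.isUnit_iff_isUnit_det, isUnit_iff_ne_zero]
    intro hdet0
    obtain ⟨v, hv, hv0⟩ := Matrix.exists_mulVec_eq_zero_iff.mpr hdet0
    have hMv : M *ᵥ v = a • v := by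
      have := hv0
      rw [Matrix.sub_mulVec, Matrix.smul_mulVec, Matrix.one_mulVec, sub_eq_zero] at this
      exact this
    have := hEigPos a v hv hMv
    linarith
  -- the Blaschke product as bprod
  set L : List ℂ := List.ofFn α with hL
  have hLmem : ∀ a ∈ L, a.re < 0 := by
    intro a ha
    rw [hL, List.mem_ofFn] at ha
    obtain ⟨k, rfl⟩ := ha
    exact hα k
  set B₀ : Matrix (Fin n) (Fin n) ℂ := bprod M L with hB0
  set B : Matrix (Fin n) (Fin n) ℂ := blaschkeEvalM ρ α M with hB
  have hBeq : B = ρ • B₀ := by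
    rw [hB, hB0, blaschkeEvalM, bprod, hL]
    congr 1
    rw [List.map_ofFn]
    rfl
  -- injectivity of 1 - BᴴB
  have hinj : ∀ x : Fin n → ℂ, ((1 : Matrix (Fin n) (Fin n) ℂ) - Bᴴ * B) *ᵥ x = 0 → x = 0 := by
    intro x hx
    have hBBx : (Bᴴ * B) *ᵥ x = x := by
      rw [Matrix.sub_mulVec, Matrix.one_mulVec, sub_eq_zero] at hx
      exact hx.symm
    have hq : star (B *ᵥ x) ⬝ᵥ (B *ᵥ x) = star x ⬝ᵥ x := by
      rw [← qform, hBBx]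
    have hq0 : star (B₀ *ᵥ x) ⬝ᵥ (B₀ *ᵥ x) = star x ⬝ᵥ x := by
      have h1 : B *ᵥ x = ρ • (B₀ *ᵥ x) := by
        rw [hBeq, Matrix.smul_mulVec]
      rw [h1, star_smul, smul_dotProduct, dotProduct_smul, smul_eq_mul, smul_eq_mul,
        ← mul_assoc] at hq
      have hρ1 : star ρ * ρ = 1 := by
        rw [Complex.star_def, ← Complex.normSq_eq_conj_mul_self, Complex.normSq_eq_norm_sq, hρ]
        norm_num
      rwa [hρ1, one_mul] at hq
    -- write x = P *ᵥ w
    set P : Matrix (Fin n) (Fin n) ℂ := polyProd M L.reverse with hP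
    have hPU : IsUnit P := by
      rw [hP, polyProd]
      apply List.prod_isUnit
      intro X hX
      obtain ⟨b, hb, rfl⟩ := List.mem_map.mp hX
      exact hdet b (hLmem b (List.mem_reverse.mp hb))
    have hPdU : IsUnit P.det := (Matrix.isUnit_iff_isUnit_det _).mp hPU
    set w : Fin n → ℂ := P⁻¹ *ᵥ x with hw
    have hxw : x = P *ᵥ w := by
      rw [hw, Matrix.mulVec_mulVec, Matrix.mul_nonsing_inv _ hPdU, Matrix.one_mulVec]
    have hkey := key_lemma M hCps hdet L hLmem w (by rw [← hP, ← hxw]; exact hq0)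
    have hlen : L.length = d := by rw [hL, List.length_ofFn]
    have hw0 : w = 0 := by
      apply krylov_endgame M (fun μ v hv hMv => ne_of_gt (hEigPos μ v hv hMv)) w
      intro j hj
      exact hkey j (by omega)
    rw [hxw, hw0, Matrix.mulVec_zero]
  -- conclusions
  have hU : IsUnit ((1 : Matrix (Fin n) (Fin n) ℂ) - Bᴴ * B) := by
    rw [Matrix.isUnit_iff_isUnit_det, isUnit_iff_ne_zero]
    intro h0
    obtain ⟨v, hv, hv0⟩ := Matrix.exists_mulVec_eq_zero_iff.mpr h0
    exact hv (hinj v hv0)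
  refine ⟨hU, ?_, ?_⟩
  · intro h
    obtain ⟨v, hv⟩ := h.exists_hasEigenvector
    have hveq : (Bᴴ * B) *ᵥ v = v := by
      have := hv.apply_eq_smul
      rw [one_smul] at this
      rw [← Matrix.toLin'_apply, this]
    have : v = 0 := by
      apply hinj
      rw [Matrix.sub_mulVec, Matrix.one_mulVec, hveq, sub_self]
    exact hv.right this
  · rw [Matrix.rank_of_isUnit _ hU, Fintype.card_fin]
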